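/- Let S be a semigroup, λ a nonzero cardinal and n a positive integer with n ≤ λ. Then the semigroup 𝓘_λ^n(S) is orthodox (regular with the set of idempotents closed under multiplication) if and only if S is orthodox. -/
import Mathlib


open Classical

namespace ISemExt

/-- Carrier for the extension `𝓘_λ^n(S)`: an element is a function assigning to each
pair `(x,y)` of points of `lam` an optional value in `S` (its labelled graph). -/
def Elem (lam S : Type) : Type := lam → lam → Option S

/-- The zero element (the empty map). -/
def zeroE (lam S : Type) : Elem lam S := fun _ _ => none

/-- Multiplication in `𝓘_λ^n(S)`: composition of labelled partial maps,
multiplying the labels along composable pairs. -/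
noncomputable def mulE {lam S : Type} [Mul S] (f g : Elem lam S) : Elem lam S :=
  fun x z =>
    if h : ∃ y s t, f x y = some s ∧ g y z = some t then
      some (h.choose_spec.choose * h.choose_spec.choose_spec.choose)
    else none

/-- The graph of an element. -/
def graphOf {lam S : Type} (f : Elem lam S) : Set (lam × lam) :=
  {p | (f p.1 p.2).isSome}

/-- `Valid n f` says that `f` is an element of `𝓘_λ^n(S)`: it is a partial
injective labelled map (in both directions) of rank at most `n`. -/
def Valid {lam S : Type} (n : ℕ) (f : Elem lam S) : Prop :=
  (∀ ⦃x y₁ y₂⦄, (f x y₁).isSome → (f x y₂).isSome → y₁ = y₂) ∧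
  (∀ ⦃x₁ x₂ y⦄, (f x₁ y).isSome → (f x₂ y).isSome → x₁ = x₂) ∧
  (graphOf f).Finite ∧ (graphOf f).ncard ≤ n

/-- The element with rows `(a₁,…,a_i)`, `(s₁,…,s_i)`, `(b₁,…,b_i)`. -/
noncomputable def mk3 {lam S : Type} {i : ℕ} (a : Fin i → lam) (s : Fin i → S)
    (b : Fin i → lam) : Elem lam S :=
  fun x y => if h : ∃ j, a j = x ∧ b j = y then some (s h.choose) else none

section Helpers

variable {lam S : Type} [Semigroup S]

lemma exists_of_mulE_isSome {f g : Elem lam S} {x z : lam}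
    (h : (mulE f g x z).isSome) :
    ∃ y, (f x y).isSome ∧ (g y z).isSome := by
  by_cases hex : ∃ y s t, f x y = some s ∧ g y z = some t
  · obtain ⟨y, s, t, h1, h2⟩ := hex
    exact ⟨y, by simp [h1], by simp [h2]⟩
  · rw [show mulE f g x z = none from dif_neg hex] at h
    simp at h

lemma mulE_eq_none {f g : Elem lam S} {x z : lam}
    (h : ∀ y, ¬((f x y).isSome ∧ (g y z).isSome)) :
    mulE f g x z = none := by
  apply dif_neg
  rintro ⟨y, s, t, h1, h2⟩
  exact h y ⟨by simp [h1], by simp [h2]⟩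

lemma mulE_spec {f g : Elem lam S} {x z : lam}
    (hex : ∃ y s t, f x y = some s ∧ g y z = some t) :
    ∃ y s t, f x y = some s ∧ g y z = some t ∧ mulE f g x z = some (s * t) :=
  ⟨hex.choose, hex.choose_spec.choose, hex.choose_spec.choose_spec.choose,
   hex.choose_spec.choose_spec.choose_spec.1, hex.choose_spec.choose_spec.choose_spec.2,
   dif_pos hex⟩

lemma mulE_eq_some {f g : Elem lam S} {x y z : lam} {s t : S}
    (huniq : ∀ y', (f x y').isSome → y' = y)
    (hy : f x y = some s) (hz : g y z = some t) :
    mulE f g x z = some (s * t) := by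
  obtain ⟨y', s', t', h1, h2, h3⟩ := mulE_spec (f := f) (g := g) ⟨y, s, t, hy, hz⟩
  have hyy : y' = y := huniq y' (by simp [h1])
  subst hyy
  rw [hy] at h1
  rw [hz] at h2
  rw [h3, Option.some_injective _ h1, Option.some_injective _ h2]

/-- The singleton element supported at `(x₀, x₀)` with label `a`. -/
noncomputable def singE (x₀ : lam) (a : S) : Elem lam S :=
  fun x y => if x = x₀ ∧ y = x₀ then some a else none

lemma singE_isSome {x₀ : lam} {a : S} {x y : lam} :
    ((singE x₀ a : Elem lam S) x y).isSome ↔ x = x₀ ∧ y = x₀ := by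
  unfold singE
  split <;> simp_all

lemma singE_apply {x₀ : lam} {a : S} : (singE x₀ a : Elem lam S) x₀ x₀ = some a :=
  if_pos ⟨rfl, rfl⟩

lemma singE_valid {n : ℕ} (hn : 0 < n) (x₀ : lam) (a : S) :
    Valid n (singE x₀ a : Elem lam S) := by
  have hgraph : graphOf (singE x₀ a : Elem lam S) = {(x₀, x₀)} := by
    ext ⟨x, y⟩
    simp [graphOf, singE_isSome, Prod.ext_iff]
  refine ⟨?_, ?_, ?_, ?_⟩
  · intro x y₁ y₂ h1 h2
    rw [(singE_isSome.mp h1).2, (singE_isSome.mp h2).2]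
  · intro x₁ x₂ y h1 h2
    rw [(singE_isSome.mp h1).1, (singE_isSome.mp h2).1]
  · rw [hgraph]; exact Set.finite_singleton _
  · rw [hgraph, Set.ncard_singleton]; exact hn

lemma singE_idem {x₀ : lam} {a : S} (ha : a * a = a) :
    mulE (singE x₀ a) (singE x₀ a) = (singE x₀ a : Elem lam S) := by
  funext x z
  by_cases hx : x = x₀ ∧ z = x₀
  · obtain ⟨rfl, rfl⟩ := hx
    rw [mulE_eq_some (fun y' h => (singE_isSome.mp h).2) singE_apply singE_apply,
      ha, singE_apply]
  · rw [show (singE x₀ a : Elem lam S) x z = none from if_neg hx]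
    apply mulE_eq_none
    rintro y ⟨h1, h2⟩
    exact hx ⟨(singE_isSome.mp h1).1, (singE_isSome.mp h2).2⟩

/-- Idempotents of the extension are diagonal with idempotent labels. -/
lemma idem_diag {n : ℕ} {f : Elem lam S} (hf : Valid n f) (hff : mulE f f = f) :
    (∀ x y, (f x y).isSome → x = y) ∧ (∀ x s, f x x = some s → s * s = s) := by
  constructor
  · intro x y h
    have h' : (mulE f f x y).isSome := by rw [hff]; exact h
    obtain ⟨w, h1, h2⟩ := exists_of_mulE_isSome h'
    have hw : w = y := hf.1 h1 h
    subst hw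
    exact hf.2.1 h h2
  · intro x s hs
    have hsome : (f x x).isSome := by simp [hs]
    have h1 : mulE f f x x = some (s * s) :=
      mulE_eq_some (fun y' h' => hf.1 h' hsome) hs hs
    rw [hff, hs] at h1
    exact (Option.some_injective _ h1).symm

end Helpers

/-- The semigroup `𝓘_λ^n(S)` is orthodox (regular and the idempotents form a
subsemigroup) if and only if `S` is orthodox. -/
theorem orthodox_iff (lam S : Type) [Nonempty lam] [Semigroup S]
    (n : ℕ) (hn : 0 < n) (hcard : (n : Cardinal) ≤ Cardinal.mk lam) :
    ((∀ f : Elem lam S, Valid n f →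
        ∃ g : Elem lam S, Valid n g ∧ f = mulE (mulE f g) f) ∧
      (∀ f g : Elem lam S, Valid n f → Valid n g → mulE f f = f → mulE g g = g →
        mulE (mulE f g) (mulE f g) = mulE f g)) ↔
    ((∀ a : S, ∃ b : S, a = a * b * a) ∧
      (∀ a b : S, a * a = a → b * b = b → (a * b) * (a * b) = a * b)) := by
  obtain ⟨x₀⟩ := ‹Nonempty lam›
  constructor
  · rintro ⟨hreg, hid⟩
    constructor
    · -- regularity of S
      intro a
      obtain ⟨g, hgv, hfg⟩ := hreg (singE x₀ a) (singE_valid hn x₀ a)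
      have heval : mulE (mulE (singE x₀ a) g) (singE x₀ a) x₀ x₀ = some a := by
        rw [← congrFun (congrFun hfg x₀) x₀, singE_apply]
      have hsome : (mulE (mulE (singE x₀ a) g) (singE x₀ a) x₀ x₀).isSome := by
        simp [heval]
      obtain ⟨w, hw1, hw2⟩ := exists_of_mulE_isSome hsome
      rw [(singE_isSome.mp hw2).1] at hw1
      obtain ⟨y, hy1, hy2⟩ := exists_of_mulE_isSome hw1
      rw [(singE_isSome.mp hy1).2] at hy2
      obtain ⟨b, hb⟩ := Option.isSome_iff_exists.mp hy2
      have h1 : mulE (singE x₀ a) g x₀ x₀ = some (a * b) :=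
        mulE_eq_some (fun y' h => (singE_isSome.mp h).2) singE_apply hb
      have huniq2 : ∀ w', (mulE (singE x₀ a) g x₀ w').isSome → w' = x₀ := by
        intro w' h
        obtain ⟨y', hy1', hy2'⟩ := exists_of_mulE_isSome h
        rw [(singE_isSome.mp hy1').2] at hy2'
        exact hgv.1 hy2' hy2
      have h2 : mulE (mulE (singE x₀ a) g) (singE x₀ a) x₀ x₀ = some (a * b * a) :=
        mulE_eq_some huniq2 h1 singE_apply
      rw [heval] at h2
      exact ⟨b, Option.some_injective _ h2⟩
    · -- idempotents closed
      intro a b ha hb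
      have H := hid (singE x₀ a) (singE x₀ b) (singE_valid hn x₀ a)
        (singE_valid hn x₀ b) (singE_idem ha) (singE_idem hb)
      have hval : mulE (singE x₀ a) (singE x₀ b) x₀ x₀ = some (a * b) :=
        mulE_eq_some (fun y' h => (singE_isSome.mp h).2) singE_apply singE_apply
      have huniq : ∀ w', (mulE (singE x₀ a) (singE x₀ b) x₀ w').isSome → w' = x₀ := by
        intro w' h
        obtain ⟨y', h1, h2⟩ := exists_of_mulE_isSome h
        exact (singE_isSome.mp h2).2
      have h2 : mulE (mulE (singE x₀ a) (singE x₀ b))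
          (mulE (singE x₀ a) (singE x₀ b)) x₀ x₀ = some ((a * b) * (a * b)) :=
        mulE_eq_some huniq hval hval
      rw [H, hval] at h2
      exact (Option.some_injective _ h2).symm
  · rintro ⟨hreg, hid⟩
    constructor
    · -- regularity of the extension
      intro f hf
      classical
      set inv : S → S := fun s => (hreg s).choose with hinv
      have hinvs : ∀ s : S, s = s * inv s * s := fun s => (hreg s).choose_spec
      set g : Elem lam S := fun y x => (f x y).map inv with hg
      have hgsome : ∀ y x, (g y x).isSome ↔ (f x y).isSome := by
        intro y x
        cases hfx : f x y <;> simp [hg, hfx]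
      have hgval : Valid n g := by
        refine ⟨?_, ?_, ?_, ?_⟩
        · intro x y₁ y₂ h1 h2
          exact hf.2.1 ((hgsome _ _).mp h1) ((hgsome _ _).mp h2)
        · intro x₁ x₂ y h1 h2
          exact hf.1 ((hgsome _ _).mp h1) ((hgsome _ _).mp h2)
        · have : graphOf g = Prod.swap '' graphOf f := by
            ext ⟨p1, p2⟩
            constructor
            · intro h
              exact ⟨(p2, p1), (hgsome p1 p2).mp h, rfl⟩
            · rintro ⟨⟨q1, q2⟩, hq, heq⟩
              obtain ⟨rfl, rfl⟩ : q2 = p1 ∧ q1 = p2 := by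
                simpa [Prod.ext_iff] using heq
              exact (hgsome _ _).mpr hq
          rw [this]
          exact hf.2.2.1.image _
        · have : graphOf g = Prod.swap '' graphOf f := by
            ext ⟨p1, p2⟩
            constructor
            · intro h
              exact ⟨(p2, p1), (hgsome p1 p2).mp h, rfl⟩
            · rintro ⟨⟨q1, q2⟩, hq, heq⟩
              obtain ⟨rfl, rfl⟩ : q2 = p1 ∧ q1 = p2 := by
                simpa [Prod.ext_iff] using heq
              exact (hgsome _ _).mpr hq
          rw [this, Set.ncard_image_of_injective _ Prod.swap_injective]
          exact hf.2.2.2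
      refine ⟨g, hgval, ?_⟩
      funext x z
      by_cases hxz : (f x z).isSome
      · obtain ⟨s, hs⟩ := Option.isSome_iff_exists.mp hxz
        have hgz : g z x = some (inv s) := by rw [hg]; simp [hs]
        have h1 : mulE f g x x = some (s * inv s) :=
          mulE_eq_some (fun y' h => hf.1 h hxz) hs hgz
        have huniq2 : ∀ w', (mulE f g x w').isSome → w' = x := by
          intro w' h
          obtain ⟨y, hy1, hy2⟩ := exists_of_mulE_isSome h
          obtain rfl := hf.1 hy1 hxz
          exact hf.2.1 ((hgsome _ _).mp hy2) hxz
        have h2 : mulE (mulE f g) f x z = some (s * inv s * s) :=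
          mulE_eq_some huniq2 h1 hs
        rw [hs, h2, ← hinvs s]
      · rw [Option.not_isSome_iff_eq_none.mp hxz]
        symm
        apply mulE_eq_none
        rintro w ⟨hw1, hw2⟩
        obtain ⟨y, hy1, hy2⟩ := exists_of_mulE_isSome hw1
        have hfw : (f w y).isSome := (hgsome _ _).mp hy2
        rw [hf.1 hfw hw2] at hy1
        exact hxz hy1
    · -- idempotents closed
      intro e f he hf hee hff
      obtain ⟨hediag, heidem⟩ := idem_diag he hee
      obtain ⟨hfdiag, hfidem⟩ := idem_diag hf hff
      funext x z
      by_cases h : (mulE e f x z).isSome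
      · obtain ⟨y, h1, h2⟩ := exists_of_mulE_isSome h
        have hxy : x = y := hediag _ _ h1
        rw [← hxy] at h1 h2
        have hxz : x = z := hfdiag _ _ h2
        rw [← hxz] at h2 ⊢
        obtain ⟨a, hae⟩ := Option.isSome_iff_exists.mp h1
        obtain ⟨b, hbf⟩ := Option.isSome_iff_exists.mp h2
        have hval : mulE e f x x = some (a * b) :=
          mulE_eq_some (fun y' h' => (hediag _ _ h').symm) hae hbf
        have huniq : ∀ w', (mulE e f x w').isSome → w' = x := by
          intro w' hw
          obtain ⟨y', hy1, hy2⟩ := exists_of_mulE_isSome hw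
          rw [← hediag _ _ hy1] at hy2
          exact (hfdiag _ _ hy2).symm
        have h2' : mulE (mulE e f) (mulE e f) x x = some ((a * b) * (a * b)) :=
          mulE_eq_some huniq hval hval
        rw [h2', hval, hid a b (heidem _ _ hae) (hfidem _ _ hbf)]
      · rw [Option.not_isSome_iff_eq_none.mp h]
        apply mulE_eq_none
        rintro w ⟨hw1, hw2⟩
        obtain ⟨y, hy1, hy2⟩ := exists_of_mulE_isSome hw1
        rw [← hediag _ _ hy1] at hy2
        rw [← hfdiag _ _ hy2] at hw2
        exact h hw2

end ISemExt
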